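/- arXiv:1201.5558 — 3 statements merged into one kernel-verified Lean document; each statement's English description precedes it below -/
import Mathlib

section
/- Let f : (0,∞) → ℂ be locally absolutely continuous, of bounded variation on (0,∞), with lim_{t→∞} f(t) = 0 (so that its derivative f' is Lebesgue integrable on (0,∞)). Then the cosine Fourier transform f̂_c(x) = ∫_0^∞ f(t) cos(xt) dt is Lebesgue integrable on (0,∞) if and only if ∫_0^∞ |f̂'_s(x)|/x dx < ∞, where f̂'_s(x) = ∫_0^∞ f'(t) sin(xt) dt is the sine Fourier transform of f'. (That is, f̂_c ∈ L^1(0,∞) if and only if f' belongs to the space Q_0.) -/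
open MeasureTheory Filter Set Real

lemma aux_fubini (f' : ℝ → ℂ) (hf' : MeasureTheory.IntegrableOn f' (Set.Ioi 0))
    (x N : ℝ) (hx : 0 < x) (hN : 0 ≤ N) :
    ∫ t in Set.Ioc 0 N, (-∫ s in Set.Ioi t, f' s) * (Real.cos (x*t) : ℂ) =
      -((x:ℂ)⁻¹ * ∫ s in Set.Ioi 0, f' s * (Real.sin (x * min N s) : ℂ)) := by
  set μ := volume.restrict (Set.Ioc (0:ℝ) N) with hμ
  set ν := volume.restrict (Set.Ioi (0:ℝ)) with hν
  have hfin : IsFiniteMeasure μ := by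
    constructor
    rw [hμ, Measure.restrict_apply_univ]
    exact measure_Ioc_lt_top
  set H : ℝ × ℝ → ℂ := Set.indicator {q : ℝ × ℝ | q.1 < q.2}
    (fun q => f' q.2 * (Real.cos (x * q.1) : ℂ)) with hH
  -- integrability of H on the product
  have hS : MeasurableSet {q : ℝ × ℝ | q.1 < q.2} := measurableSet_lt measurable_fst measurable_snd
  have hmeas : AEStronglyMeasurable H (μ.prod ν) := by
    refine AEStronglyMeasurable.indicator ?_ hS
    exact (hf'.1.comp_snd).mul
      ((Complex.continuous_ofReal.comp
        (Real.continuous_cos.comp (continuous_const.mul continuous_fst))).aestronglyMeasurable)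
  have hbound : Integrable (fun p : ℝ × ℝ => ‖f' p.2‖) (μ.prod ν) := by
    have := (integrable_const (1:ℝ) (μ := μ)).mul_prod hf'.norm
    simpa using this
  have hint : Integrable H (μ.prod ν) := by
    refine hbound.mono' hmeas (ae_of_all _ fun p => ?_)
    calc ‖H p‖ ≤ ‖f' p.2 * (Real.cos (x * p.1) : ℂ)‖ := by
          rw [hH]; apply norm_indicator_le_norm_self
      _ = ‖f' p.2‖ * |Real.cos (x * p.1)| := by
          rw [norm_mul, Complex.norm_real, Real.norm_eq_abs]
      _ ≤ ‖f' p.2‖ * 1 := by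
          exact mul_le_mul_of_nonneg_left (Real.abs_cos_le_one _) (norm_nonneg _)
      _ = ‖f' p.2‖ := mul_one _
  have hswap : ∫ t, (∫ s, H (t, s) ∂ν) ∂μ = ∫ s, (∫ t, H (t, s) ∂μ) ∂ν := by
    have := MeasureTheory.integral_integral_swap (μ := μ) (ν := ν)
      (f := fun t s => H (t, s)) (by exact hint)
    exact this
  -- LHS equals - the iterated integral
  have hL : ∫ t in Set.Ioc 0 N, (-∫ s in Set.Ioi t, f' s) * (Real.cos (x*t) : ℂ)
      = -∫ t, (∫ s, H (t, s) ∂ν) ∂μ := by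
    rw [← integral_neg]
    refine integral_congr_ae ((ae_restrict_iff' measurableSet_Ioc).2 (ae_of_all _ fun t ht => ?_))
    have h1 : ∀ s : ℝ, H (t, s) = Set.indicator (Set.Ioi t) (fun s => f' s * (Real.cos (x*t) : ℂ)) s := by
      intro s
      simp only [hH, Set.indicator, Set.mem_setOf_eq, Set.mem_Ioi]
    calc (-∫ s in Set.Ioi t, f' s) * (Real.cos (x*t) : ℂ)
        = -∫ s in Set.Ioi t, f' s * (Real.cos (x*t) : ℂ) := by
          rw [integral_mul_const]; ring
      _ = -∫ s, H (t, s) ∂ν := by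
          congr 1
          rw [hν]
          simp only [h1]
          rw [setIntegral_indicator measurableSet_Ioi, Set.Ioi_inter_Ioi,
            max_eq_right ht.1.le]
  -- RHS : compute inner integral
  have hR : ∫ s, (∫ t, H (t, s) ∂μ) ∂ν
      = (x:ℂ)⁻¹ * ∫ s in Set.Ioi 0, f' s * (Real.sin (x * min N s) : ℂ) := by
    rw [← integral_const_mul]
    refine integral_congr_ae ((ae_restrict_iff' measurableSet_Ioi).2 (ae_of_all _ fun s hs => ?_))
    have h1 : ∀ t : ℝ, H (t, s) = Set.indicator (Set.Iio s) (fun t => f' s * (Real.cos (x*t) : ℂ)) t := by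
      intro t
      simp only [hH, Set.indicator, Set.mem_setOf_eq, Set.mem_Iio]
    have h2 : ∫ t, H (t, s) ∂μ = ∫ t in Set.Ioc 0 (min N s), f' s * (Real.cos (x*t) : ℂ) := by
      rw [hμ]
      simp only [h1]
      rw [setIntegral_indicator measurableSet_Iio]
      rcases le_or_gt s N with hsN | hNs
      · have he : Set.Ioc (0:ℝ) N ∩ Set.Iio s = Set.Ioo 0 s := by
          ext t
          simp only [Set.mem_inter_iff, Set.mem_Ioc, Set.mem_Iio, Set.mem_Ioo]
          constructor
          · rintro ⟨⟨h1, _⟩, h3⟩; exact ⟨h1, h3⟩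
          · rintro ⟨h1, h2⟩; exact ⟨⟨h1, (h2.trans_le hsN).le⟩, h2⟩
        rw [he, min_eq_right hsN]
        exact setIntegral_congr_set Ioo_ae_eq_Ioc
      · have he : Set.Ioc (0:ℝ) N ∩ Set.Iio s = Set.Ioc 0 N := by
          ext t
          simp only [Set.mem_inter_iff, Set.mem_Ioc, Set.mem_Iio]
          exact ⟨fun h => h.1, fun h => ⟨h, h.2.trans_lt hNs⟩⟩
        rw [he, min_eq_left hNs.le]
    show ∫ t, H (t, s) ∂μ = _
    rw [h2, integral_const_mul]
    have h3 : ∫ t in Set.Ioc 0 (min N s), (Real.cos (x*t) : ℂ)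
        = ((x⁻¹ * Real.sin (x * min N s) : ℝ) : ℂ) := by
      rw [← intervalIntegral.integral_of_le (le_min hN hs.out.le)]
      rw [intervalIntegral.integral_ofReal]
      congr 1
      have := intervalIntegral.integral_comp_mul_left (a := (0:ℝ)) (b := min N s)
        (f := fun t => Real.cos t) (c := x) hx.ne'
      rw [this, integral_cos]
      simp [smul_eq_mul]
    rw [h3]
    push_cast
    ring
  calc ∫ t in Set.Ioc 0 N, (-∫ s in Set.Ioi t, f' s) * (Real.cos (x*t) : ℂ)
      = -∫ t, (∫ s, H (t, s) ∂ν) ∂μ := hL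
    _ = -∫ s, (∫ t, H (t, s) ∂μ) ∂ν := by rw [hswap]
    _ = -((x:ℂ)⁻¹ * ∫ s in Set.Ioi 0, f' s * (Real.sin (x * min N s) : ℂ)) := by rw [hR]

/-- **Theorem 2.** If `f : (0,∞) → ℂ` is locally absolutely continuous (with derivative
`f'`), of bounded variation, and tends to `0` at infinity (so `f'` is integrable on
`(0,∞)`), then the (improper) cosine Fourier transform `f̂_c(x) = ∫_0^∞ f(t) cos(xt) dt`
is Lebesgue integrable on `(0,∞)` if and only if `∫_0^∞ |f̂'_s(x)|/x dx < ∞`, i.e. iff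
`f'` belongs to the space `Q₀`, where `f̂'_s(x) = ∫_0^∞ f'(t) sin(xt) dt`. -/
theorem cosine_fourier_transform_integrable_iff_Q0 (f f' fc : ℝ → ℂ)
    -- local absolute continuity on (0,∞) with derivative f'
    (hac : ∀ a b : ℝ, 0 < a → a ≤ b → f b - f a = ∫ t in a..b, f' t)
    -- bounded variation on (0,∞)
    (hbv : BoundedVariationOn f (Set.Ioi 0))
    -- vanishing at infinity
    (hlim : Filter.Tendsto f Filter.atTop (nhds 0))
    -- f' is Lebesgue integrable on (0,∞)
    (hf' : MeasureTheory.IntegrableOn f' (Set.Ioi 0))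
    -- fc is the (improper) cosine Fourier transform of f
    (hfc : ∀ x : ℝ, 0 < x →
      Filter.Tendsto (fun N : ℝ => ∫ t in (0 : ℝ)..N, f t * (Real.cos (x * t) : ℂ))
        Filter.atTop (nhds (fc x))) :
    MeasureTheory.IntegrableOn fc (Set.Ioi 0) ↔
      (∫⁻ x in Set.Ioi (0 : ℝ),
        ENNReal.ofReal (‖∫ t in Set.Ioi (0 : ℝ), f' t * (Real.sin (x * t) : ℂ)‖ / x)) < ⊤ := by
  -- representation of `f` as minus the tail integral of `f'`
  have hrep : ∀ t : ℝ, 0 < t → f t = -∫ s in Set.Ioi t, f' s := by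
    intro t ht
    have h1 : Tendsto (fun N => ∫ s in t..N, f' s) atTop (nhds (∫ s in Set.Ioi t, f' s)) :=
      intervalIntegral_tendsto_integral_Ioi t (hf'.mono_set (Set.Ioi_subset_Ioi ht.le)) tendsto_id
    have h2 : Tendsto (fun N => f N - f t) atTop (nhds (0 - f t)) :=
      hlim.sub tendsto_const_nhds
    have h3 : (fun N => f N - f t) =ᶠ[atTop] fun N => ∫ s in t..N, f' s :=
      eventually_atTop.2 ⟨t, fun N hN => hac t N ht hN⟩
    have := tendsto_nhds_unique (h2.congr' h3) h1
    rw [← this]; ring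
  set J : ℝ → ℂ := fun x => ∫ t in Set.Ioi 0, f' t * (Real.sin (x * t) : ℂ) with hJ
  -- key pointwise formula for the cosine transform
  have hkey : ∀ x : ℝ, 0 < x → fc x = -((x:ℂ)⁻¹ * J x) := by
    intro x hx
    have hA : (fun N : ℝ => ∫ t in (0:ℝ)..N, f t * (Real.cos (x * t) : ℂ)) =ᶠ[atTop]
        fun N : ℝ => -((x:ℂ)⁻¹ * ∫ s in Set.Ioi 0, f' s * (Real.sin (x * min N s) : ℂ)) := by
      refine eventually_atTop.2 ⟨0, fun N hN => ?_⟩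
      show (∫ t in (0:ℝ)..N, f t * (Real.cos (x * t) : ℂ)) =
        -((x:ℂ)⁻¹ * ∫ s in Set.Ioi 0, f' s * (Real.sin (x * min N s) : ℂ))
      rw [intervalIntegral.integral_of_le hN, ← aux_fubini f' hf' x N hx hN]
      refine integral_congr_ae ((ae_restrict_iff' measurableSet_Ioc).2
        (ae_of_all _ fun t ht => ?_))
      dsimp only
      rw [hrep t ht.1]
    have hB : Tendsto (fun N : ℝ => ∫ s in Set.Ioi 0, f' s * (Real.sin (x * min N s) : ℂ))
        atTop (nhds (J x)) := by
      refine tendsto_integral_filter_of_dominated_convergence (fun s => ‖f' s‖)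
        ?_ ?_ hf'.norm ?_
      · exact Filter.Eventually.of_forall fun N =>
          hf'.1.mul ((Complex.continuous_ofReal.comp (Real.continuous_sin.comp
          (continuous_const.mul (continuous_const.min continuous_id)))).aestronglyMeasurable)
      · refine Filter.Eventually.of_forall fun N => ae_of_all _ fun s => ?_
        calc ‖f' s * (Real.sin (x * min N s) : ℂ)‖
            = ‖f' s‖ * |Real.sin (x * min N s)| := by
              rw [norm_mul, Complex.norm_real, Real.norm_eq_abs]
          _ ≤ ‖f' s‖ * 1 :=
              mul_le_mul_of_nonneg_left (Real.abs_sin_le_one _) (norm_nonneg _)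
          _ = ‖f' s‖ := mul_one _
      · refine ae_of_all _ fun s => ?_
        refine Tendsto.congr' ?_ tendsto_const_nhds
        filter_upwards [eventually_ge_atTop s] with N hN
        rw [min_eq_right hN]
    have hT : Tendsto (fun N : ℝ => -((x:ℂ)⁻¹ *
        ∫ s in Set.Ioi 0, f' s * (Real.sin (x * min N s) : ℂ))) atTop (nhds (-((x:ℂ)⁻¹ * J x))) :=
      (hB.const_mul _).neg
    exact tendsto_nhds_unique (hfc x hx) (hT.congr' hA.symm)
  -- continuity of J
  have hJcont : Continuous J := by
    refine continuous_of_dominated (bound := fun t => ‖f' t‖) (fun y => ?_)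
      (fun y => ae_of_all _ fun t => ?_) hf'.norm (ae_of_all _ fun t => ?_)
    · exact hf'.1.mul ((Complex.continuous_ofReal.comp (Real.continuous_sin.comp
        (continuous_const.mul continuous_id))).aestronglyMeasurable)
    · calc ‖f' t * (Real.sin (y * t) : ℂ)‖
          = ‖f' t‖ * |Real.sin (y * t)| := by
            rw [norm_mul, Complex.norm_real, Real.norm_eq_abs]
        _ ≤ ‖f' t‖ * 1 :=
            mul_le_mul_of_nonneg_left (Real.abs_sin_le_one _) (norm_nonneg _)
        _ = ‖f' t‖ := mul_one _
    · exact continuous_const.mul (Complex.continuous_ofReal.comp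
        (Real.continuous_sin.comp (continuous_id.mul continuous_const)))
  -- measurability of fc on (0,∞)
  have hmeasfc : AEStronglyMeasurable fc (volume.restrict (Set.Ioi 0)) := by
    have hφ : ContinuousOn (fun x : ℝ => -((x:ℂ)⁻¹ * J x)) (Set.Ioi 0) := by
      refine ContinuousOn.neg (ContinuousOn.mul ?_ hJcont.continuousOn)
      exact ContinuousOn.inv₀ Complex.continuous_ofReal.continuousOn
        (fun x hx => by exact_mod_cast (ne_of_gt (Set.mem_Ioi.1 hx)))
    refine (hφ.aestronglyMeasurable measurableSet_Ioi).congr ?_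
    refine (ae_restrict_iff' measurableSet_Ioi).2 (ae_of_all _ fun x hx => ?_)
    exact (hkey x hx).symm
  -- norm identity
  have hnorm : ∀ᵐ x ∂(volume.restrict (Set.Ioi (0:ℝ))),
      ENNReal.ofReal ‖fc x‖ =
        ENNReal.ofReal (‖∫ t in Set.Ioi (0:ℝ), f' t * (Real.sin (x * t) : ℂ)‖ / x) := by
    refine (ae_restrict_iff' measurableSet_Ioi).2 (ae_of_all _ fun x hx => ?_)
    have hx : (0:ℝ) < x := hx
    rw [hkey x hx]
    congr 1
    rw [norm_neg, norm_mul, norm_inv, Complex.norm_real, Real.norm_eq_abs,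
      abs_of_pos hx, div_eq_inv_mul]
  have hiff : MeasureTheory.IntegrableOn fc (Set.Ioi 0) ↔
      HasFiniteIntegral fc (volume.restrict (Set.Ioi 0)) :=
    ⟨fun h => h.2, fun h => ⟨hmeasfc, h⟩⟩
  rw [hiff, hasFiniteIntegral_iff_norm, lintegral_congr_ae hnorm]
end

section
/- Let g : ℝ → ℂ be Lebesgue integrable and suppose ∫_ℝ |ĝ(x)|/|x| dx < ∞, where ĝ(x) = ∫_ℝ g(t) e^{−ixt} dt is the Fourier transform of g (i.e., g belongs to the space Q). Then g satisfies the cancelation property ∫_ℝ g(t) dt = 0. -/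
open MeasureTheory Filter Set Real Complex

/-- **Q ⊆ L¹₀(ℝ).** If `g ∈ L¹(ℝ)` and `∫_ℝ |ĝ(x)|/|x| dx < ∞`, i.e. `g` belongs to the
space `Q`, where `ĝ(x) = ∫_ℝ g(t) e^{−ixt} dt`, then `g` has the cancelation property
`∫_ℝ g(t) dt = 0`. -/
theorem integral_eq_zero_of_mem_Q (g : ℝ → ℂ)
    -- g is Lebesgue integrable on ℝ
    (hg : MeasureTheory.Integrable g)
    -- g ∈ Q : ∫_ℝ |ĝ(x)|/|x| dx < ∞
    (hQ : (∫⁻ x : ℝ,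
        ENNReal.ofReal
          (‖∫ t : ℝ, g t * Complex.exp (-(Complex.I) * (x : ℂ) * (t : ℂ))‖ / |x|)) < ⊤) :
    ∫ t : ℝ, g t = 0 := by
  by_contra h
  set F : ℝ → ℂ := fun x => ∫ t : ℝ, g t * Complex.exp (-(Complex.I) * (x : ℂ) * (t : ℂ))
    with hFdef
  have hF0 : F 0 = ∫ t : ℝ, g t := by simp [hFdef]
  have hπ : (2 * π : ℝ) ≠ 0 := by positivity
  have hcont : Continuous F := by
    have h1 : Continuous (FourierTransform.fourier g) :=
      VectorFourier.fourierIntegral_continuous Real.continuous_fourierChar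
        (innerSL ℝ).continuous₂ hg
    have h2 : F = fun x => FourierTransform.fourier g (x / (2 * π)) := by
      ext x
      rw [hFdef, Real.fourier_real_eq_integral_exp_smul]
      refine integral_congr_ae (Eventually.of_forall fun t => ?_)
      simp only [smul_eq_mul]
      rw [mul_comm]
      congr 1
      have harg : (-2 * π * t * (x / (2 * π)) : ℝ) = -(x * t) := by
        field_simp [Real.pi_ne_zero]
      rw [harg]
      push_cast
      ring
    rw [h2]
    exact h1.comp (continuous_id.div_const _)
  set c : ℝ := ‖∫ t : ℝ, g t‖ with hc
  have hcpos : 0 < c := by simpa [hc] using norm_pos_iff.2 h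
  have htend : Tendsto (fun x => ‖F x‖) (nhds 0) (nhds c) := by
    rw [← hF0] at hc
    rw [hc]
    exact (hcont.norm).continuousAt
  have hev : ∀ᶠ x in nhds (0 : ℝ), c / 2 < ‖F x‖ :=
    htend.eventually (eventually_gt_nhds (by linarith))
  obtain ⟨δ, hδpos, hδ⟩ := Metric.eventually_nhds_iff.1 hev
  -- lower bound the lintegral on Ioo 0 δ
  have hle : ∫⁻ x in Ioo (0:ℝ) δ, ENNReal.ofReal (c / 2 / x) ≤
      ∫⁻ x : ℝ, ENNReal.ofReal (‖F x‖ / |x|) := by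
    rw [← lintegral_indicator measurableSet_Ioo]
    refine lintegral_mono fun x => ?_
    by_cases hx : x ∈ Ioo (0:ℝ) δ
    · rw [indicator_of_mem hx]
      refine ENNReal.ofReal_le_ofReal ?_
      have hx0 : 0 < x := hx.1
      have hxd : dist x 0 < δ := by
        rw [Real.dist_eq, sub_zero, abs_of_pos hx0]; exact hx.2
      have hle2 := (hδ hxd).le
      rw [abs_of_pos hx0]
      gcongr
    · simp [indicator_of_notMem hx]
  -- but that lintegral is infinite
  have htop : ∫⁻ x in Ioo (0:ℝ) δ, ENNReal.ofReal (c / 2 / x) = ⊤ := by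
    by_contra htop
    have hmeas : AEMeasurable (fun x : ℝ => c / 2 / x)
        (volume.restrict (Ioo (0:ℝ) δ)) := by
      apply Measurable.aemeasurable
      exact (measurable_const.div measurable_id)
    have hint : IntegrableOn (fun x : ℝ => c / 2 / x) (Ioo (0:ℝ) δ) := by
      refine ⟨hmeas.aestronglyMeasurable, ?_⟩
      rw [hasFiniteIntegral_iff_norm]
      have : ∀ᵐ x ∂(volume.restrict (Ioo (0:ℝ) δ)),
          ENNReal.ofReal ‖c / 2 / x‖ = ENNReal.ofReal (c / 2 / x) := by
        filter_upwards [ae_restrict_mem measurableSet_Ioo] with x hx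
        rw [Real.norm_eq_abs,
          _root_.abs_of_nonneg (div_nonneg (by positivity) hx.1.le)]
      rw [lintegral_congr_ae this]
      exact lt_top_iff_ne_top.2 htop
    have hint' : IntegrableOn (fun x : ℝ => x⁻¹) (Ioo (0:ℝ) δ) := by
      have h2 : IntegrableOn (fun x : ℝ => (c/2)⁻¹ * (c / 2 / x)) (Ioo (0:ℝ) δ) :=
        hint.const_mul _
      refine h2.congr_fun (fun x hx => ?_) measurableSet_Ioo
      have hx0 : x ≠ 0 := ne_of_gt hx.1
      have hc2 : c / 2 ≠ 0 := by positivity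
      field_simp
    have hiv : IntervalIntegrable (fun x : ℝ => x⁻¹) volume 0 δ := by
      rwa [intervalIntegrable_iff_integrableOn_Ioo_of_le hδpos.le]
    rw [intervalIntegrable_inv_iff] at hiv
    rcases hiv with h1 | h1
    · exact hδpos.ne h1
    · exact h1 (by rw [uIcc_of_le hδpos.le]; exact left_mem_Icc.2 hδpos.le)
  rw [htop] at hle
  exact hQ.ne (top_le_iff.1 hle)
end

section
/- For all a > 0 and y > 0, the principal value integral satisfies lim_{δ→0+} ∫_{{x>0 : |x−a|>δ}} sin(yx)/(a² − x²) dx = (1/a)[sin(ay)·Ci(ay) − cos(ay)·Si(ay)], where Ci(u) = −∫_u^∞ (cos t)/t dt is the cosine integral and Si(u) = ∫_0^u (sin t)/t dt is the sine integral. -/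
open MeasureTheory Filter Set Real intervalIntegral

namespace PVaux

lemma sinc_intervalIntegrable (p q : ℝ) :
    IntervalIntegrable (fun t => Real.sin t / t) volume p q := by
  rw [intervalIntegrable_iff]
  refine Integrable.mono' (g := fun _ => (1:ℝ)) (integrableOn_const measure_Ioc_lt_top.ne) ?_ ?_
  · exact (Real.measurable_sin.div measurable_id).aestronglyMeasurable
  · refine Eventually.of_forall fun t => ?_
    rw [Real.norm_eq_abs, abs_div]
    rcases eq_or_ne t 0 with h | h
    · simp [h]
    · exact div_le_one_of_le₀ Real.abs_sin_le_abs (abs_nonneg t)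

lemma cosdiv_intervalIntegrable {p q : ℝ} (hp : 0 < p) (hq : 0 < q) :
    IntervalIntegrable (fun t => Real.cos t / t) volume p q := by
  apply ContinuousOn.intervalIntegrable
  apply Real.continuous_cos.continuousOn.div continuousOn_id
  intro x hx
  have : min p q ≤ x := hx.1
  have : 0 < x := lt_of_lt_of_le (lt_min hp hq) this
  exact ne_of_gt this

lemma sinc_bound (t : ℝ) : |Real.sin t / t| ≤ 1 := by
  rw [abs_div]
  rcases eq_or_ne t 0 with h | h
  · simp [h]
  · exact div_le_one_of_le₀ Real.abs_sin_le_abs (abs_nonneg t)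

/-- combination lemma: (r cos w + v sin w)/w splits -/
lemma combo_integral {p q r v : ℝ} (hp : 0 < p) (hq : 0 < q) :
    ∫ w in p..q, (r * Real.cos w + v * Real.sin w) / w =
      r * (∫ w in p..q, Real.cos w / w) + v * ∫ w in p..q, Real.sin w / w := by
  rw [← intervalIntegral.integral_const_mul, ← intervalIntegral.integral_const_mul,
    ← intervalIntegral.integral_add ((cosdiv_intervalIntegrable hp hq).const_mul r)
      ((sinc_intervalIntegrable p q).const_mul v)]
  apply intervalIntegral.integral_congr
  intro w _
  rcases eq_or_ne w 0 with h | h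
  · simp [h]
  · field_simp

end PVaux

namespace PVaux

lemma subst_left (u p q : ℝ) :
    ∫ t in p..q, Real.sin t / (u - t) =
      ∫ w in (u - q)..(u - p),
        (Real.sin u * Real.cos w + (-Real.cos u) * Real.sin w) / w := by
  have h := intervalIntegral.integral_comp_sub_left (a := p) (b := q)
    (fun w => (Real.sin u * Real.cos w + (-Real.cos u) * Real.sin w) / w) u
  rw [← h]
  apply intervalIntegral.integral_congr
  intro t _
  simp only [neg_mul, ← sub_eq_add_neg, ← Real.sin_sub, sub_sub_cancel]

lemma subst_right (u p q : ℝ) :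
    ∫ t in p..q, Real.sin t / (u + t) =
      ∫ w in (p + u)..(q + u),
        ((-Real.sin u) * Real.cos w + Real.cos u * Real.sin w) / w := by
  have h := intervalIntegral.integral_comp_add_right (a := p) (b := q)
    (fun w => ((-Real.sin u) * Real.cos w + Real.cos u * Real.sin w) / w) u
  rw [← h]
  apply intervalIntegral.integral_congr
  intro t _
  have h' := Real.sin_sub (t + u) u
  rw [add_sub_cancel_right] at h'
  show Real.sin t / (u + t) =
    (-Real.sin u * Real.cos (t + u) + Real.cos u * Real.sin (t + u)) / (t + u)
  rw [add_comm u t]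
  congr 1
  linear_combination h'

lemma pf_split {u p q : ℝ} (hu : 0 < u)
    (h1 : ∀ t ∈ uIcc p q, u - t ≠ 0) (h2 : ∀ t ∈ uIcc p q, u + t ≠ 0) :
    ∫ t in p..q, Real.sin t / (u^2 - t^2) =
      (1/(2*u)) * ((∫ t in p..q, Real.sin t / (u - t)) +
        ∫ t in p..q, Real.sin t / (u + t)) := by
  have i1 : IntervalIntegrable (fun t => Real.sin t / (u - t)) volume p q :=
    (Real.continuous_sin.continuousOn.div
      (continuous_const.sub continuous_id).continuousOn h1).intervalIntegrable
  have i2 : IntervalIntegrable (fun t => Real.sin t / (u + t)) volume p q :=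
    (Real.continuous_sin.continuousOn.div
      (continuous_const.add continuous_id).continuousOn h2).intervalIntegrable
  rw [← intervalIntegral.integral_add i1 i2, ← intervalIntegral.integral_const_mul]
  apply intervalIntegral.integral_congr
  intro t ht
  have h1t := h1 t ht
  have h2t := h2 t ht
  have h3 : u^2 - t^2 ≠ 0 := by
    intro h
    rcases mul_eq_zero.1 (by nlinarith : (u - t) * (u + t) = 0) with h' | h'
    exacts [h1t h', h2t h']
  field_simp
  ring

lemma scale {a y : ℝ} (hy : 0 < y) (p q : ℝ) :
    ∫ x in p..q, Real.sin (y*x) / (a^2 - x^2) =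
      y * ∫ t in (y*p)..(y*q), Real.sin t / ((a*y)^2 - t^2) := by
  have h := intervalIntegral.integral_comp_mul_right
    (a := p) (b := q) (fun t => Real.sin t / (a^2 - (t/y)^2)) hy.ne'
  have lhs : ∀ x : ℝ, Real.sin (x*y) / (a^2 - (x*y/y)^2) = Real.sin (y*x) / (a^2 - x^2) := by
    intro x
    rw [mul_div_cancel_right₀ x hy.ne', mul_comm]
  have rhs : ∀ t : ℝ, Real.sin t / (a^2 - (t/y)^2) = y^2 * (Real.sin t / ((a*y)^2 - t^2)) := by
    intro t
    have : a^2 - (t/y)^2 = ((a*y)^2 - t^2) / y^2 := by field_simp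
    rw [this, div_div_eq_mul_div, mul_comm, mul_div_assoc]
  calc ∫ x in p..q, Real.sin (y*x) / (a^2 - x^2)
      = ∫ x in p..q, Real.sin (x*y) / (a^2 - (x*y/y)^2) := by
        apply intervalIntegral.integral_congr; intro x _; exact (lhs x).symm
    _ = y⁻¹ • ∫ t in p*y..q*y, Real.sin t / (a^2 - (t/y)^2) := h
    _ = y * ∫ t in (y*p)..(y*q), Real.sin t / ((a*y)^2 - t^2) := by
        rw [mul_comm p y, mul_comm q y]
        simp only [smul_eq_mul]
        rw [intervalIntegral.integral_congr (g := fun t => y^2 * (Real.sin t / ((a*y)^2 - t^2)))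
          (fun t _ => rhs t), intervalIntegral.integral_const_mul]
        field_simp

end PVaux

namespace PVaux

lemma subst_left' (u p q : ℝ) :
    ∫ t in p..q, Real.sin t / (u - t) =
      ∫ w in (p - u)..(q - u),
        ((-Real.sin u) * Real.cos w + (-Real.cos u) * Real.sin w) / w := by
  have h := intervalIntegral.integral_comp_sub_right (a := p) (b := q)
    (fun w => ((-Real.sin u) * Real.cos w + (-Real.cos u) * Real.sin w) / w) u
  rw [← h]
  apply intervalIntegral.integral_congr
  intro t _
  have h' := Real.sin_add (t - u) u
  rw [sub_add_cancel] at h'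
  show Real.sin t / (u - t) =
    (-Real.sin u * Real.cos (t - u) + -Real.cos u * Real.sin (t - u)) / (t - u)
  have : u - t = -(t - u) := by ring
  rw [this, div_neg, ← neg_div]
  congr 1
  linear_combination -h'

lemma left_eval {u β : ℝ} (hu : 0 < u) (hβ : 0 < β) (hβu : β < u) :
    ∫ t in (0:ℝ)..(u - β), Real.sin t / (u^2 - t^2) =
      (1/(2*u)) * ((Real.sin u * (∫ w in β..u, Real.cos w / w) +
          (-Real.cos u) * ∫ w in β..u, Real.sin w / w) +
        ((-Real.sin u) * (∫ w in u..(2*u-β), Real.cos w / w) +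
          Real.cos u * ∫ w in u..(2*u-β), Real.sin w / w)) := by
  have hle : (0:ℝ) ≤ u - β := by linarith
  have h1 : ∀ t ∈ uIcc (0:ℝ) (u - β), u - t ≠ 0 := by
    intro t ht
    rw [uIcc_of_le hle] at ht
    have := ht.2
    intro h; nlinarith
  have h2 : ∀ t ∈ uIcc (0:ℝ) (u - β), u + t ≠ 0 := by
    intro t ht
    rw [uIcc_of_le hle] at ht
    have := ht.1
    intro h; nlinarith
  rw [pf_split hu h1 h2, subst_left, subst_right]
  have e1 : u - (u - β) = β := by ring
  have e2 : u - (0:ℝ) = u := by ring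
  have e3 : (0:ℝ) + u = u := by ring
  have e4 : (u - β) + u = 2*u - β := by ring
  rw [e1, e2, e3, e4, combo_integral hβ hu, combo_integral hu (by linarith : (0:ℝ) < 2*u - β)]

lemma right_eval {u β B : ℝ} (hu : 0 < u) (hβ : 0 < β) (hB : u + β < B) :
    ∫ t in (u + β)..B, Real.sin t / (u^2 - t^2) =
      (1/(2*u)) * (((-Real.sin u) * (∫ w in β..(B - u), Real.cos w / w) +
          (-Real.cos u) * ∫ w in β..(B - u), Real.sin w / w) +
        ((-Real.sin u) * (∫ w in (2*u + β)..(B + u), Real.cos w / w) +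
          Real.cos u * ∫ w in (2*u + β)..(B + u), Real.sin w / w)) := by
  have hle : u + β ≤ B := hB.le
  have h1 : ∀ t ∈ uIcc (u + β) B, u - t ≠ 0 := by
    intro t ht
    rw [uIcc_of_le hle] at ht
    have := ht.1
    intro h; nlinarith
  have h2 : ∀ t ∈ uIcc (u + β) B, u + t ≠ 0 := by
    intro t ht
    rw [uIcc_of_le hle] at ht
    have := ht.1
    intro h; nlinarith
  rw [pf_split hu h1 h2, subst_left', subst_right]
  have e1 : (u + β) - u = β := by ring
  have e2 : (u + β) + u = 2*u + β := by ring
  rw [e1, e2, combo_integral hβ (by linarith : (0:ℝ) < B - u),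
    combo_integral (by linarith : (0:ℝ) < 2*u + β) (by linarith : (0:ℝ) < B + u)]

end PVaux

namespace PVaux

lemma f_meas (a y : ℝ) : Measurable (fun x => Real.sin (y*x) / (a^2 - x^2)) := by
  apply Measurable.div
  · exact Real.measurable_sin.comp (measurable_const.mul measurable_id)
  · exact measurable_const.sub ((measurable_id.pow_const 2))

lemma inv_sq_integrable {a δ : ℝ} (hδ : 0 < δ) :
    IntegrableOn (fun x : ℝ => ((x - a)^2)⁻¹) (Ioi (a + δ)) := by
  have hderiv : ∀ x ∈ Ici (a + δ), HasDerivAt (fun x : ℝ => -(x - a)⁻¹) (((x - a)^2)⁻¹) x := by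
    intro x hx
    have hne : x - a ≠ 0 := by
      have : a + δ ≤ x := hx
      intro h; nlinarith
    have h1 : HasDerivAt (fun x : ℝ => x - a) 1 x := (hasDerivAt_id x).sub_const a
    have h2 := h1.inv hne
    have h3 : HasDerivAt (fun x : ℝ => -(x - a)⁻¹) (-(-1 / (x - a) ^ 2)) x := h2.neg
    convert h3 using 1
    field_simp
  have hpos : ∀ x ∈ Ioi (a + δ), 0 ≤ ((x - a)^2)⁻¹ := fun x _ => by positivity
  have htend : Tendsto (fun x : ℝ => -(x - a)⁻¹) atTop (nhds (-0 : ℝ)) := by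
    apply Tendsto.neg
    apply tendsto_inv_atTop_zero.comp
    exact tendsto_atTop_add_const_right atTop (-a) tendsto_id
  exact integrableOn_Ioi_deriv_of_nonneg' hderiv hpos htend

lemma tail_integrable {a y δ : ℝ} (ha : 0 < a) (hδ : 0 < δ) :
    IntegrableOn (fun x => Real.sin (y*x) / (a^2 - x^2)) (Ioi (a + δ)) := by
  apply Integrable.mono' (inv_sq_integrable hδ (a := a))
  · exact (f_meas a y).aestronglyMeasurable
  · rw [ae_restrict_iff' measurableSet_Ioi]
    refine Eventually.of_forall fun x hx => ?_
    have hx' : a + δ < x := hx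
    have h1 : (x - a)^2 ≤ |a^2 - x^2| := by
      rw [abs_of_neg (by nlinarith : a^2 - x^2 < 0)]
      nlinarith
    have h2 : (0:ℝ) < (x - a)^2 := by nlinarith
    rw [Real.norm_eq_abs, abs_div, ← one_div]
    exact div_le_div₀ (by norm_num) (Real.abs_sin_le_one _) h2 h1

lemma left_integrable {a y δ : ℝ} (ha : 0 < a) (hδ : 0 < δ) (hδa : δ < a) :
    IntegrableOn (fun x => Real.sin (y*x) / (a^2 - x^2)) (Ioo 0 (a - δ)) := by
  apply IntegrableOn.mono_set _ Ioo_subset_Icc_self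
  apply ContinuousOn.integrableOn_Icc
  apply ContinuousOn.div
  · exact (Real.continuous_sin.comp (continuous_const.mul continuous_id)).continuousOn
  · exact (continuous_const.sub (continuous_pow 2)).continuousOn
  · intro x hx
    obtain ⟨hx1, hx2⟩ := hx
    intro h; nlinarith

end PVaux

namespace PVaux

lemma key (Ci : ℝ → ℝ)
    (hCi : ∀ u : ℝ, 0 < u →
      Filter.Tendsto (fun A : ℝ => ∫ t in u..A, Real.cos t / t)
        Filter.atTop (nhds (-Ci u)))
    {a y δ : ℝ} (ha : 0 < a) (hy : 0 < y) (hδ : 0 < δ) (hδa : δ < a) :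
    ∫ x in {x : ℝ | 0 < x ∧ δ < |x - a|}, Real.sin (y * x) / (a ^ 2 - x ^ 2) =
      (1/(2*a)) * (2 * Real.sin (a*y) * Ci (a*y)
        + Real.sin (a*y) * ((∫ t in (a*y)..(2*(a*y)+y*δ), Real.cos t / t)
            - ∫ t in (a*y)..(2*(a*y)-y*δ), Real.cos t / t)
        + Real.cos (a*y) * ((∫ t in (a*y)..(2*(a*y)-y*δ), Real.sin t / t)
            - (∫ t in (y*δ)..(a*y), Real.sin t / t)
            - ∫ t in (y*δ)..(2*(a*y)+y*δ), Real.sin t / t)) := by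
  have hu : 0 < a*y := mul_pos ha hy
  have hβ : 0 < y*δ := mul_pos hy hδ
  have hβu : y*δ < a*y := by nlinarith
  -- set decomposition
  have hset : {x : ℝ | 0 < x ∧ δ < |x - a|} = Ioo 0 (a - δ) ∪ Ioi (a + δ) := by
    ext x
    simp only [mem_setOf_eq, mem_union, mem_Ioo, mem_Ioi]
    constructor
    · rintro ⟨hx, habs⟩
      rcases lt_abs.mp habs with h | h
      · right; linarith
      · left; exact ⟨hx, by linarith⟩
    · rintro (⟨h1, h2⟩ | h)
      · exact ⟨h1, lt_abs.mpr (Or.inr (by linarith))⟩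
      · exact ⟨by linarith, lt_abs.mpr (Or.inl (by linarith))⟩
  have hdisj : Disjoint (Ioo (0:ℝ) (a - δ)) (Ioi (a + δ)) := by
    rw [Set.disjoint_left]
    intro x hx hx'
    have := hx.2
    have : a + δ < x := hx'
    linarith [hx.2]
  rw [hset, setIntegral_union hdisj measurableSet_Ioi (left_integrable ha hδ hδa)
    (tail_integrable ha hδ)]
  -- left piece
  have hleft : ∫ x in Ioo (0:ℝ) (a - δ), Real.sin (y*x) / (a^2 - x^2) =
      (1/(2*(a*y))) * y *
        ((Real.sin (a*y) * (∫ w in (y*δ)..(a*y), Real.cos w / w) +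
          (-Real.cos (a*y)) * ∫ w in (y*δ)..(a*y), Real.sin w / w) +
        ((-Real.sin (a*y)) * (∫ w in (a*y)..(2*(a*y)-y*δ), Real.cos w / w) +
          Real.cos (a*y) * ∫ w in (a*y)..(2*(a*y)-y*δ), Real.sin w / w)) := by
    rw [← integral_Ioc_eq_integral_Ioo, ← intervalIntegral.integral_of_le (by linarith),
      scale hy, mul_zero]
    rw [show y*(a-δ) = a*y - y*δ by ring, left_eval hu hβ hβu]
    ring
  rw [hleft]
  -- tail piece
  have t1 := MeasureTheory.intervalIntegral_tendsto_integral_Ioi (a + δ)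
    (tail_integrable ha hδ (y := y)) tendsto_id
  have h0 : Tendsto (fun A : ℝ => y*A) atTop atTop :=
    Tendsto.const_mul_atTop hy tendsto_id
  have htop1 : Tendsto (fun A : ℝ => y*A - a*y) atTop atTop :=
    (tendsto_atTop_add_const_right atTop (-(a*y)) h0).congr
      (fun A => (sub_eq_add_neg (y*A) (a*y)).symm)
  have htop2 : Tendsto (fun A : ℝ => y*A + a*y) atTop atTop :=
    tendsto_atTop_add_const_right atTop (a*y) h0
  have hK1 : Tendsto (fun A : ℝ => ∫ t in (a*y)..(y*A - a*y), Real.cos t / t)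
      atTop (nhds (-Ci (a*y))) := (hCi (a*y) hu).comp htop1
  have hK2 : Tendsto (fun A : ℝ => ∫ t in (a*y)..(y*A + a*y), Real.cos t / t)
      atTop (nhds (-Ci (a*y))) := (hCi (a*y) hu).comp htop2
  have hS0 : Tendsto (fun A : ℝ => ∫ t in (y*A - a*y)..(y*A + a*y), Real.sin t / t)
      atTop (nhds 0) := by
    have hg : Tendsto (fun A : ℝ => (y*A - a*y)⁻¹ * (2*(a*y))) atTop (nhds 0) := by
      have := htop1.inv_tendsto_atTop.mul_const (2*(a*y))
      rwa [zero_mul] at this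
    apply squeeze_zero_norm' _ hg
    filter_upwards [htop1.eventually_gt_atTop 0] with A hA
    have hmin : min (y*A - a*y) (y*A + a*y) = y*A - a*y := min_eq_left (by nlinarith)
    calc ‖∫ t in (y*A - a*y)..(y*A + a*y), Real.sin t / t‖
        ≤ (y*A - a*y)⁻¹ * |(y*A + a*y) - (y*A - a*y)| := by
          apply intervalIntegral.norm_integral_le_of_norm_le_const
          intro t ht
          have htl : y*A - a*y < t := by
            have := ht.1
            rwa [hmin] at this
          have htpos : 0 < t := lt_trans hA htl
          rw [Real.norm_eq_abs, abs_div, ← one_div, abs_of_pos htpos]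
          exact div_le_div₀ (by norm_num) (Real.abs_sin_le_one t) hA htl.le
      _ = (y*A - a*y)⁻¹ * (2*(a*y)) := by
          rw [show (y*A + a*y) - (y*A - a*y) = 2*(a*y) by ring, abs_of_pos (by positivity)]
  -- closed form of truncated tail
  have heq : ∀ᶠ A in atTop, (∫ x in (a + δ)..(id A), Real.sin (y*x) / (a^2 - x^2)) =
      (1/(2*(a*y))) * y *
        (((-Real.sin (a*y)) * ((∫ t in (y*δ)..(a*y), Real.cos t / t)
              + ∫ t in (a*y)..(y*A - a*y), Real.cos t / t)
          + Real.cos (a*y) * ((∫ t in (y*A - a*y)..(y*A + a*y), Real.sin t / t)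
              - ∫ t in (y*δ)..(2*(a*y)+y*δ), Real.sin t / t))
          + (-Real.sin (a*y)) * ((∫ t in (a*y)..(y*A + a*y), Real.cos t / t)
              - ∫ t in (a*y)..(2*(a*y)+y*δ), Real.cos t / t)) := by
    filter_upwards [eventually_gt_atTop (2*a + δ)] with A hA
    have hB : a*y + y*δ < y*A := by nlinarith
    have h2u : a*y < y*A - a*y := by nlinarith
    rw [id_eq, scale hy, show y*(a+δ) = a*y + y*δ by ring, right_eval hu hβ hB]
    have r1 : ∫ t in (y*δ)..(y*A - a*y), Real.cos t / t =
        (∫ t in (y*δ)..(a*y), Real.cos t / t) + ∫ t in (a*y)..(y*A - a*y), Real.cos t / t :=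
      (intervalIntegral.integral_add_adjacent_intervals
        (cosdiv_intervalIntegrable hβ hu)
        (cosdiv_intervalIntegrable hu (by linarith))).symm
    have r2 : (∫ t in (a*y)..(2*(a*y)+y*δ), Real.cos t / t)
        + ∫ t in (2*(a*y)+y*δ)..(y*A + a*y), Real.cos t / t =
        ∫ t in (a*y)..(y*A + a*y), Real.cos t / t :=
      intervalIntegral.integral_add_adjacent_intervals
        (cosdiv_intervalIntegrable hu (by linarith))
        (cosdiv_intervalIntegrable (by linarith) (by nlinarith))
    have r3 : (∫ t in (y*δ)..(y*A - a*y), Real.sin t / t)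
        + ∫ t in (y*A - a*y)..(y*A + a*y), Real.sin t / t =
        ∫ t in (y*δ)..(y*A + a*y), Real.sin t / t :=
      intervalIntegral.integral_add_adjacent_intervals
        (sinc_intervalIntegrable _ _) (sinc_intervalIntegrable _ _)
    have r4 : (∫ t in (y*δ)..(2*(a*y)+y*δ), Real.sin t / t)
        + ∫ t in (2*(a*y)+y*δ)..(y*A + a*y), Real.sin t / t =
        ∫ t in (y*δ)..(y*A + a*y), Real.sin t / t :=
      intervalIntegral.integral_add_adjacent_intervals
        (sinc_intervalIntegrable _ _) (sinc_intervalIntegrable _ _)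
    have r2' : ∫ t in (2*(a*y)+y*δ)..(y*A + a*y), Real.cos t / t =
        (∫ t in (a*y)..(y*A + a*y), Real.cos t / t)
          - ∫ t in (a*y)..(2*(a*y)+y*δ), Real.cos t / t := by linarith
    have r34 : ∫ t in (2*(a*y)+y*δ)..(y*A + a*y), Real.sin t / t =
        ((∫ t in (y*A - a*y)..(y*A + a*y), Real.sin t / t)
          + ∫ t in (y*δ)..(y*A - a*y), Real.sin t / t)
          - ∫ t in (y*δ)..(2*(a*y)+y*δ), Real.sin t / t := by linarith
    rw [r1, r2', r34]
    ring
  -- limit of closed form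
  have t2 : Tendsto (fun A : ℝ => ∫ x in (a + δ)..(id A), Real.sin (y*x) / (a^2 - x^2))
      atTop (nhds ((1/(2*(a*y))) * y *
        (((-Real.sin (a*y)) * ((∫ t in (y*δ)..(a*y), Real.cos t / t) + -Ci (a*y))
          + Real.cos (a*y) * (0 - ∫ t in (y*δ)..(2*(a*y)+y*δ), Real.sin t / t))
          + (-Real.sin (a*y)) * (-Ci (a*y)
              - ∫ t in (a*y)..(2*(a*y)+y*δ), Real.cos t / t)))) := by
    refine Tendsto.congr' (Filter.EventuallyEq.symm heq) ?_
    apply Tendsto.const_mul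
    exact (((tendsto_const_nhds.add hK1).const_mul (-Real.sin (a*y))).add
      ((hS0.sub tendsto_const_nhds).const_mul (Real.cos (a*y)))).add
      ((hK2.sub tendsto_const_nhds).const_mul (-Real.sin (a*y)))
  have tail_eq := tendsto_nhds_unique t1 t2
  rw [tail_eq]
  field_simp
  ring
end PVaux

/-- **A principal value integral formula.** For all `a > 0` and `y > 0`,
`p.v. ∫_0^∞ sin(yx)/(a² − x²) dx = (1/a)[sin(ay)·Ci(ay) − cos(ay)·Si(ay)]`,
where `Ci(u) = −∫_u^∞ cos t / t dt` is the cosine integral and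
`Si(u) = ∫_0^u sin t / t dt` is the sine integral. -/
theorem pv_integral_sin_div_sq_sub_sq (Ci : ℝ → ℝ)
    -- Ci is the cosine integral: Ci(u) = −∫_u^∞ cos t / t dt (improper integral)
    (hCi : ∀ u : ℝ, 0 < u →
      Filter.Tendsto (fun A : ℝ => ∫ t in u..A, Real.cos t / t)
        Filter.atTop (nhds (-Ci u))) :
    ∀ a y : ℝ, 0 < a → 0 < y →
      Filter.Tendsto (fun δ : ℝ =>
          ∫ x in {x : ℝ | 0 < x ∧ δ < |x - a|}, Real.sin (y * x) / (a ^ 2 - x ^ 2))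
        (nhdsWithin 0 (Set.Ioi 0))
        (nhds ((1 / a) *
          (Real.sin (a * y) * Ci (a * y) -
            Real.cos (a * y) * ∫ t in (0 : ℝ)..(a * y), Real.sin t / t))) := by
  intro a y ha hy
  have hu : 0 < a*y := mul_pos ha hy
  set P : ℝ → ℝ := fun b => ∫ t in (0:ℝ)..b, Real.sin t / t with hP_def
  have hPcont : Continuous P :=
    intervalIntegral.continuous_primitive (fun p q => PVaux.sinc_intervalIntegrable p q) 0
  -- continuity of Q at 2*(a*y)
  have hQ : ContinuousAt (fun b => ∫ t in (a*y)..b, Real.cos t / t) (2*(a*y)) := by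
    have := intervalIntegral.integral_hasDerivAt_right
      (f := fun t => Real.cos t / t) (a := a*y) (b := 2*(a*y))
      (PVaux.cosdiv_intervalIntegrable hu (by linarith))
      ⟨univ, univ_mem,
        ((Real.measurable_cos.div measurable_id).aestronglyMeasurable : _)⟩
      (ContinuousAt.div Real.continuous_cos.continuousAt continuousAt_id (by positivity))
    exact this.continuousAt
  -- limits of the arguments
  have hg1 : Tendsto (fun δ : ℝ => 2*(a*y) + y*δ) (nhdsWithin 0 (Set.Ioi 0))
      (nhds (2*(a*y))) := by
    have : Tendsto (fun δ : ℝ => 2*(a*y) + y*δ) (nhds 0) (nhds (2*(a*y) + y*0)) :=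
      Continuous.tendsto (by continuity) 0
    rw [mul_zero, add_zero] at this
    exact this.mono_left nhdsWithin_le_nhds
  have hg2 : Tendsto (fun δ : ℝ => 2*(a*y) - y*δ) (nhdsWithin 0 (Set.Ioi 0))
      (nhds (2*(a*y))) := by
    have : Tendsto (fun δ : ℝ => 2*(a*y) - y*δ) (nhds 0) (nhds (2*(a*y) - y*0)) :=
      Continuous.tendsto (by continuity) 0
    rw [mul_zero, sub_zero] at this
    exact this.mono_left nhdsWithin_le_nhds
  have hg3 : Tendsto (fun δ : ℝ => y*δ) (nhdsWithin 0 (Set.Ioi 0)) (nhds 0) := by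
    have : Tendsto (fun δ : ℝ => y*δ) (nhds 0) (nhds (y*0)) :=
      Continuous.tendsto (by continuity) 0
    rw [mul_zero] at this
    exact this.mono_left nhdsWithin_le_nhds
  -- the limit of the closed form E'
  have hE' : Tendsto (fun δ : ℝ =>
      (1/(2*a)) * (2 * Real.sin (a*y) * Ci (a*y)
        + Real.sin (a*y) * ((∫ t in (a*y)..(2*(a*y)+y*δ), Real.cos t / t)
            - ∫ t in (a*y)..(2*(a*y)-y*δ), Real.cos t / t)
        + Real.cos (a*y) * ((P (2*(a*y)-y*δ) - P (a*y))
            - (P (a*y) - P (y*δ)) - (P (2*(a*y)+y*δ) - P (y*δ)))))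
      (nhdsWithin 0 (Set.Ioi 0))
      (nhds ((1/(2*a)) * (2 * Real.sin (a*y) * Ci (a*y)
        + Real.sin (a*y) * ((∫ t in (a*y)..(2*(a*y)), Real.cos t / t)
            - ∫ t in (a*y)..(2*(a*y)), Real.cos t / t)
        + Real.cos (a*y) * ((P (2*(a*y)) - P (a*y))
            - (P (a*y) - P 0) - (P (2*(a*y)) - P 0))))) := by
    apply Tendsto.const_mul
    refine (tendsto_const_nhds.add (((hQ.tendsto.comp hg1).sub
      (hQ.tendsto.comp hg2)).const_mul _)).add (Tendsto.const_mul _ ?_)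
    exact (((hPcont.continuousAt.tendsto.comp hg2).sub tendsto_const_nhds).sub
      (tendsto_const_nhds.sub (hPcont.continuousAt.tendsto.comp hg3))).sub
      ((hPcont.continuousAt.tendsto.comp hg1).sub (hPcont.continuousAt.tendsto.comp hg3))
  -- identify the limit value
  have hval : (1/(2*a)) * (2 * Real.sin (a*y) * Ci (a*y)
        + Real.sin (a*y) * ((∫ t in (a*y)..(2*(a*y)), Real.cos t / t)
            - ∫ t in (a*y)..(2*(a*y)), Real.cos t / t)
        + Real.cos (a*y) * ((P (2*(a*y)) - P (a*y))
            - (P (a*y) - P 0) - (P (2*(a*y)) - P 0))) =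
      (1 / a) * (Real.sin (a * y) * Ci (a * y) -
        Real.cos (a * y) * ∫ t in (0 : ℝ)..(a * y), Real.sin t / t) := by
    have hP0 : P 0 = 0 := intervalIntegral.integral_same
    rw [hP0]
    show _ = (1 / a) * (Real.sin (a * y) * Ci (a * y) - Real.cos (a * y) * P (a*y))
    field_simp
    ring
  rw [← hval]
  -- transfer to the original function
  apply Tendsto.congr' _ hE'
  have hmem : Ioo (0:ℝ) a ∈ nhdsWithin (0:ℝ) (Set.Ioi 0) :=
    Ioo_mem_nhdsGT_of_mem ⟨le_rfl, ha⟩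
  filter_upwards [hmem] with δ hδ
  rw [PVaux.key Ci hCi ha hy hδ.1 hδ.2]
  congr 1
  have e1 : P (a*y) - P (y*δ) = ∫ t in (y*δ)..(a*y), Real.sin t / t :=
    intervalIntegral.integral_interval_sub_left
      (PVaux.sinc_intervalIntegrable _ _) (PVaux.sinc_intervalIntegrable _ _)
  have e2 : P (2*(a*y)-y*δ) - P (a*y) = ∫ t in (a*y)..(2*(a*y)-y*δ), Real.sin t / t :=
    intervalIntegral.integral_interval_sub_left
      (PVaux.sinc_intervalIntegrable _ _) (PVaux.sinc_intervalIntegrable _ _)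
  have e3 : P (2*(a*y)+y*δ) - P (y*δ) = ∫ t in (y*δ)..(2*(a*y)+y*δ), Real.sin t / t :=
    intervalIntegral.integral_interval_sub_left
      (PVaux.sinc_intervalIntegrable _ _) (PVaux.sinc_intervalIntegrable _ _)
  rw [e1, e2, e3]
end
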